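/- For H ∈ (0,1), θ > 0, σ ∈ ℝ and t ≥ 0, define Var_H(t) = (σ²/2) ( ∫₀ᵗ 2H e^{−z/θ} z^{2H−1} dz + e^{−2t/θ} ∫₀ᵗ 2H e^{z/θ} z^{2H−1} dz ). Then: (i) (H,t) ↦ Var_H(t) is continuous on (0,1) × [0,∞); (ii) for every t ≥ 0, lim_{H → 1⁻} Var_H(t) = σ²θ² (1 − e^{−t/θ})²; (iii) for every t ≥ 0, lim_{H → 0⁺} Var_H(t) = 0 if t = 0, and = (σ²/2)(1 + e^{−2t/θ}) if t > 0. -/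

import Mathlib

open MeasureTheory Real Filter Topology

/-- The variance function of the fOU process with deterministic initial value. -/
noncomputable def VarH (θ σ H t : ℝ) : ℝ :=
  (σ^2 / 2) *
    ((∫ z in (0:ℝ)..t, 2*H * Real.exp (-z/θ) * z ^ (2*H-1))
      + Real.exp (-2*t/θ) * (∫ z in (0:ℝ)..t, 2*H * Real.exp (z/θ) * z ^ (2*H-1)))

namespace VarHAux

/-- Auxiliary rescaled integral. -/
noncomputable def J (H s : ℝ) : ℝ := ∫ u in (0:ℝ)..1, 2*H * Real.exp (s*u) * u ^ (2*H-1)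

lemma intInt {H : ℝ} (hH : 0 < H) (c a b : ℝ) :
    IntervalIntegrable (fun z : ℝ => 2*H * Real.exp (c*z) * z ^ (2*H-1)) volume a b := by
  have h1 : IntervalIntegrable (fun z : ℝ => z ^ (2*H-1)) volume a b :=
    intervalIntegral.intervalIntegrable_rpow' (by linarith)
  exact h1.continuousOn_mul (by fun_prop)

lemma scale {H : ℝ} (hH : 0 < H) (c t : ℝ) (ht : 0 ≤ t) :
    (∫ z in (0:ℝ)..t, 2*H * Real.exp (c*z) * z ^ (2*H-1)) = t ^ (2*H) * J H (c*t) := by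
  rcases eq_or_lt_of_le ht with h0 | htpos
  · simp [← h0, Real.zero_rpow (by positivity : (2:ℝ)*H ≠ 0)]
  · have key := intervalIntegral.smul_integral_comp_mul_left
      (f := fun z => 2*H * Real.exp (c*z) * z ^ (2*H-1)) (a := (0:ℝ)) (b := 1) t
    simp only [mul_zero, mul_one, smul_eq_mul] at key
    rw [← key]
    have congrEq : (∫ u in (0:ℝ)..1, 2*H * Real.exp (c*(t*u)) * (t*u) ^ (2*H-1))
        = ∫ u in (0:ℝ)..1, t ^ (2*H-1) * (2*H * Real.exp ((c*t)*u) * u ^ (2*H-1)) := by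
      apply intervalIntegral.integral_congr
      intro u hu
      rw [Set.uIcc_of_le zero_le_one] at hu
      simp only []
      rw [Real.mul_rpow htpos.le hu.1, show c*(t*u) = (c*t)*u by ring]
      ring
    have h5 : t ^ (2*H) = t * t ^ (2*H-1) := by
      have h := Real.rpow_add htpos 1 (2*H-1)
      rw [Real.rpow_one] at h
      rw [show (1:ℝ)+(2*H-1) = 2*H by ring] at h
      exact h
    rw [congrEq, intervalIntegral.integral_const_mul, ← mul_assoc, ← h5]
    rfl

lemma Jcont {H₀ : ℝ} (hH₀ : 0 < H₀) (s₀ : ℝ) :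
    ContinuousAt (fun p : ℝ × ℝ => J p.1 p.2) (H₀, s₀) := by
  simp only [J]
  apply intervalIntegral.continuousAt_of_dominated_interval
      (bound := fun u => (2*(H₀+1) * Real.exp (|s₀|+1)) * u ^ (H₀-1))
  · filter_upwards with p
    rw [Set.uIoc_of_le zero_le_one]
    apply ContinuousOn.aestronglyMeasurable ?_ measurableSet_Ioc
    intro u hu
    have h1 : ContinuousAt (fun u : ℝ => u ^ (2*p.1-1)) u :=
      Real.continuousAt_rpow_const u _ (Or.inl (ne_of_gt hu.1))
    exact ((continuousAt_const.mul ((Real.continuous_exp.comp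
      (continuous_const.mul continuous_id)).continuousAt)).mul h1).continuousWithinAt
  · have hmem : Set.Ioo (H₀/2) (H₀+1) ×ˢ Set.Ioo (s₀-1) (s₀+1) ∈ 𝓝 ((H₀, s₀) : ℝ × ℝ) := by
      apply prod_mem_nhds <;> apply Ioo_mem_nhds <;> linarith
    filter_upwards [hmem] with p hp
    filter_upwards with u hu
    rw [Set.uIoc_of_le zero_le_one] at hu
    obtain ⟨hp1, hp2⟩ := hp
    have hu0 := hu.1
    have hu1 := hu.2
    have hp1' : 0 < p.1 := lt_trans (by linarith) hp1.1
    have habs : |p.2| ≤ |s₀| + 1 := by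
      rw [abs_le]
      cases' abs_cases s₀ with hc hc <;>
        exact ⟨by linarith [hp2.1], by linarith [hp2.2]⟩
    rw [Real.norm_eq_abs, abs_of_nonneg (by positivity)]
    have e1 : Real.exp (p.2 * u) ≤ Real.exp (|s₀|+1) := by
      apply Real.exp_le_exp.2
      calc p.2 * u ≤ |p.2 * u| := le_abs_self _
        _ = |p.2| * u := by rw [abs_mul, abs_of_pos hu0]
        _ ≤ (|s₀|+1) * 1 := mul_le_mul habs hu1 hu0.le (by positivity)
        _ = |s₀| + 1 := mul_one _
    have e2 : u ^ (2*p.1-1) ≤ u ^ (H₀-1) :=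
      Real.rpow_le_rpow_of_exponent_ge hu0 hu1 (by linarith [hp1.1])
    calc 2*p.1 * Real.exp (p.2*u) * u ^ (2*p.1-1)
        ≤ 2*(H₀+1) * Real.exp (|s₀|+1) * u ^ (H₀-1) := by
          apply mul_le_mul (mul_le_mul (by linarith [hp1.2]) e1 (Real.exp_pos _).le
            (by linarith)) e2 (Real.rpow_nonneg hu0.le _) (by positivity)
      _ = (2*(H₀+1) * Real.exp (|s₀|+1)) * u ^ (H₀-1) := by ring
  · exact (intervalIntegral.intervalIntegrable_rpow' (by linarith)).const_mul _
  · filter_upwards with u hu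
    rw [Set.uIoc_of_le zero_le_one] at hu
    have hu0 := hu.1
    have heq : ∀ p : ℝ × ℝ, 2*p.1 * Real.exp (p.2*u) * Real.exp (Real.log u * (2*p.1-1))
        = 2*p.1 * Real.exp (p.2*u) * u ^ (2*p.1-1) := by
      intro p; rw [Real.rpow_def_of_pos hu0]
    apply ContinuousAt.congr ?_ (Filter.Eventually.of_forall heq)
    fun_prop

lemma Jcont2 {H₀ : ℝ} (hH₀ : 0 < H₀) (c x : ℝ) :
    ContinuousAt (fun q : ℝ × ℝ => J q.1 (c*q.2)) (H₀, x) := by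
  have hm : ContinuousAt (fun q : ℝ × ℝ => ((q.1, c*q.2) : ℝ × ℝ)) (H₀, x) := by fun_prop
  have heq : (fun q : ℝ × ℝ => J q.1 (c*q.2))
      = (fun p : ℝ × ℝ => J p.1 p.2) ∘ (fun q : ℝ × ℝ => ((q.1, c*q.2) : ℝ × ℝ)) := rfl
  rw [heq]
  exact ContinuousAt.comp (Jcont hH₀ (c*x)) hm

lemma JcontH {H₀ : ℝ} (hH₀ : 0 < H₀) (s : ℝ) :
    ContinuousAt (fun H : ℝ => J H s) H₀ := by
  have hm : ContinuousAt (fun H : ℝ => ((H, s) : ℝ × ℝ)) H₀ := by fun_prop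
  have heq : (fun H : ℝ => J H s)
      = (fun p : ℝ × ℝ => J p.1 p.2) ∘ (fun H : ℝ => ((H, s) : ℝ × ℝ)) := rfl
  rw [heq]
  exact ContinuousAt.comp (Jcont hH₀ s) hm

lemma mf (θ σ : ℝ) {H t : ℝ} (hH : 0 < H) (ht : 0 ≤ t) :
    VarH θ σ H t = σ^2/2 * (t ^ (2*H) * J H ((-(1/θ))*t)
      + Real.exp (-2*t/θ) * (t ^ (2*H) * J H ((1/θ)*t))) := by
  have e1 : (∫ z in (0:ℝ)..t, 2*H * Real.exp (-z/θ) * z ^ (2*H-1))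
      = t ^ (2*H) * J H ((-(1/θ))*t) := by
    rw [← scale hH (-(1/θ)) t ht]
    apply intervalIntegral.integral_congr
    intro z _
    simp only []
    rw [show (-(1/θ))*z = -z/θ by ring]
  have e2 : (∫ z in (0:ℝ)..t, 2*H * Real.exp (z/θ) * z ^ (2*H-1))
      = t ^ (2*H) * J H ((1/θ)*t) := by
    rw [← scale hH (1/θ) t ht]
    apply intervalIntegral.integral_congr
    intro z _
    simp only []
    rw [show (1/θ)*z = z/θ by ring]
  rw [VarH, e1, e2]

lemma explicitIntegral {c : ℝ} (hc : c ≠ 0) (t : ℝ) (ht : 0 ≤ t) :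
    t ^ ((2:ℝ)*1) * J 1 (c*t) = 2*(Real.exp (c*t) * (t/c - 1/c^2) + 1/c^2) := by
  rw [← scale one_pos c t ht]
  have congrEq : (∫ z in (0:ℝ)..t, 2*1 * Real.exp (c*z) * z ^ (2*(1:ℝ)-1))
      = ∫ z in (0:ℝ)..t, 2 * Real.exp (c*z) * z := by
    apply intervalIntegral.integral_congr
    intro z _
    simp only []
    norm_num
  rw [congrEq]
  have hderiv : ∀ x ∈ Set.uIcc (0:ℝ) t,
      HasDerivAt (fun z => 2*(Real.exp (c*z) * (z/c - 1/c^2))) (2 * Real.exp (c*x) * x) x := by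
    intro x _
    have h1 : HasDerivAt (fun z : ℝ => c*z) c x := by
      simpa using (hasDerivAt_id x).const_mul c
    have h2 := h1.exp
    have h3 : HasDerivAt (fun z : ℝ => z/c - 1/c^2) (1/c) x :=
      ((hasDerivAt_id x).div_const c).sub_const (1/c^2)
    have h4 := (h2.mul h3).const_mul 2
    refine h4.congr_deriv ?_
    field_simp
    ring
  rw [intervalIntegral.integral_eq_sub_of_hasDerivAt hderiv
    ((by fun_prop : Continuous fun z : ℝ => 2 * Real.exp (c*z) * z).intervalIntegrable 0 t)]
  simp [Real.exp_zero]
  ring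

lemma abs_exp_sub_one_le' (x : ℝ) : |Real.exp x - 1| ≤ |x| * Real.exp |x| := by
  rcases le_or_gt 0 x with hx | hx
  · rw [abs_of_nonneg hx, abs_of_nonneg (by linarith [Real.one_le_exp hx])]
    have h1 := Real.add_one_le_exp (-x)
    have h2 : Real.exp (-x) * Real.exp x = 1 := by
      rw [← Real.exp_add]; simp
    nlinarith [Real.exp_pos x, mul_le_mul_of_nonneg_right h1 (Real.exp_pos x).le]
  · have hlt : Real.exp x < 1 := by
      calc Real.exp x < Real.exp 0 := Real.exp_lt_exp.2 hx
        _ = 1 := Real.exp_zero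
    rw [abs_of_neg hx, abs_of_nonpos (by linarith)]
    have hE : (1:ℝ) ≤ Real.exp (-x) := Real.one_le_exp (by linarith)
    have h1 := Real.add_one_le_exp x
    nlinarith [mul_nonneg (neg_nonneg.mpr hx.le) (sub_nonneg.mpr hE)]

lemma norm_one_integral {H : ℝ} (hH : 0 < H) :
    (∫ u in (0:ℝ)..1, 2*H * u ^ (2*H-1)) = 1 := by
  rw [intervalIntegral.integral_const_mul, integral_rpow (Or.inl (by linarith))]
  rw [show 2*H-1+1 = 2*H by ring, Real.one_rpow,
    Real.zero_rpow (by positivity : (2:ℝ)*H ≠ 0)]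
  field_simp
  norm_num

lemma JtoOne (s : ℝ) : Tendsto (fun H => J H s) (𝓝[>] (0:ℝ)) (𝓝 1) := by
  have key : ∀ H : ℝ, 0 < H → ‖J H s - 1‖ ≤ 2*H*(|s| * Real.exp |s|) := by
    intro H hH
    have hint1 := intInt hH s 0 1
    have hint2 : IntervalIntegrable (fun u : ℝ => 2*H * u ^ (2*H-1)) volume 0 1 :=
      (intervalIntegral.intervalIntegrable_rpow' (by linarith)).const_mul _
    have hdiff : J H s - 1 = ∫ u in (0:ℝ)..1,
        (2*H * Real.exp (s*u) * u ^ (2*H-1) - 2*H * u ^ (2*H-1)) := by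
      rw [intervalIntegral.integral_sub hint1 hint2, norm_one_integral hH]
      rfl
    rw [hdiff]
    have hb : IntervalIntegrable (fun u : ℝ => (2*H*(|s| * Real.exp |s|)) * u ^ (2*H))
        volume 0 1 :=
      (intervalIntegral.intervalIntegrable_rpow' (by linarith)).const_mul _
    have hae : ∀ᵐ u ∂(volume.restrict (Set.uIoc (0:ℝ) 1)),
        ‖2*H * Real.exp (s*u) * u ^ (2*H-1) - 2*H * u ^ (2*H-1)‖
          ≤ (2*H*(|s| * Real.exp |s|)) * u ^ (2*H) := by
      rw [Set.uIoc_of_le zero_le_one]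
      rw [ae_restrict_iff' measurableSet_Ioc]
      filter_upwards with u hu
      have hu0 := hu.1
      have hu1 := hu.2
      have hfac : 2*H*Real.exp (s*u) * u^(2*H-1) - 2*H * u^(2*H-1)
          = (2*H * u^(2*H-1)) * (Real.exp (s*u) - 1) := by ring
      rw [Real.norm_eq_abs, hfac, abs_mul, abs_of_nonneg (by positivity)]
      have h1 : |Real.exp (s*u) - 1| ≤ |s| * Real.exp |s| * u := by
        calc |Real.exp (s*u) - 1| ≤ |s*u| * Real.exp |s*u| := abs_exp_sub_one_le' _
          _ = (|s| * u) * Real.exp (|s| * u) := by rw [abs_mul, abs_of_pos hu0]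
          _ ≤ (|s| * u) * Real.exp |s| := by
              apply mul_le_mul_of_nonneg_left
                (Real.exp_le_exp.2 (mul_le_of_le_one_right (abs_nonneg s) hu1))
                (by positivity)
          _ = |s| * Real.exp |s| * u := by ring
      have hpow : u ^ (2*H) = u ^ (2*H-1) * u := by
        have h := Real.rpow_add_one (ne_of_gt hu0) (2*H-1)
        rw [show 2*H-1+1 = 2*H by ring] at h
        exact h
      calc (2*H * u^(2*H-1)) * |Real.exp (s*u) - 1|
          ≤ (2*H * u^(2*H-1)) * (|s| * Real.exp |s| * u) :=
            mul_le_mul_of_nonneg_left h1 (by positivity)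
        _ = 2*H*(|s| * Real.exp |s|) * (u^(2*H-1) * u) := by ring
        _ = 2*H*(|s| * Real.exp |s|) * u^(2*H) := by rw [← hpow]
    have hle := intervalIntegral.norm_integral_le_abs_of_norm_le hae hb
    refine hle.trans ?_
    rw [intervalIntegral.integral_const_mul, integral_rpow (Or.inl (by linarith))]
    rw [Real.one_rpow, Real.zero_rpow (by positivity : (2:ℝ)*H+1 ≠ 0)]
    rw [abs_of_nonneg (by positivity)]
    rw [mul_comm (2*H*(|s| * Real.exp |s|))]
    apply mul_le_of_le_one_left (by positivity)
    rw [div_le_one (by linarith)]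
    linarith
  have h0 : Tendsto (fun H : ℝ => 2*H*(|s| * Real.exp |s|)) (𝓝[>] (0:ℝ)) (𝓝 0) := by
    have hcont : Continuous (fun H : ℝ => 2*H*(|s| * Real.exp |s|)) := by fun_prop
    have h2 := (hcont.tendsto 0).mono_left (nhdsWithin_le_nhds (s := Set.Ioi (0:ℝ)))
    simpa using h2
  have hsub : Tendsto (fun H => J H s - 1) (𝓝[>] (0:ℝ)) (𝓝 0) := by
    apply squeeze_zero_norm' ?_ h0
    filter_upwards [self_mem_nhdsWithin] with H hH using key H hH
  have hfin := hsub.add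
    (tendsto_const_nhds : Tendsto (fun _ : ℝ => (1:ℝ)) (𝓝[>] (0:ℝ)) (𝓝 1))
  simpa using hfin

end VarHAux

/-- continuity and boundary limits (as `H → 1⁻` and `H → 0⁺`) of the
variance function of the fOU process with deterministic initial value. -/
theorem VarH_continuity_and_limits (θ σ : ℝ) (hθ : 0 < θ) :
    ContinuousOn (fun p : ℝ × ℝ => VarH θ σ p.1 p.2) (Set.Ioo (0:ℝ) 1 ×ˢ Set.Ici (0:ℝ))
    ∧ (∀ t ≥ (0:ℝ),
        Filter.Tendsto (fun H => VarH θ σ H t) (nhdsWithin 1 (Set.Iio 1))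
          (nhds (σ^2 * θ^2 * (1 - Real.exp (-t/θ))^2)))
    ∧ (Filter.Tendsto (fun H => VarH θ σ H 0) (nhdsWithin 0 (Set.Ioi 0)) (nhds 0))
    ∧ (∀ t > (0:ℝ),
        Filter.Tendsto (fun H => VarH θ σ H t) (nhdsWithin 0 (Set.Ioi 0))
          (nhds (σ^2/2 * (1 + Real.exp (-2*t/θ))))) := by
  have hθ' : θ ≠ 0 := ne_of_gt hθ
  have hVar0 : ∀ H : ℝ, VarH θ σ H 0 = 0 := by
    intro H; simp [VarH]
  refine ⟨?_, ?_, ?_, ?_⟩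
  · -- continuity
    intro p hp
    obtain ⟨hp1, hp2⟩ := hp
    have hH : 0 < p.1 := hp1.1
    have ht : (0:ℝ) ≤ p.2 := hp2
    have crpow : ContinuousAt (fun q : ℝ × ℝ => q.2 ^ (2*q.1)) p := by
      apply ContinuousAt.rpow continuous_snd.continuousAt
        (continuous_const.mul continuous_fst).continuousAt
      exact Or.inr (by simpa using by linarith : (0:ℝ) < 2*p.1)
    have cJ1 : ContinuousAt (fun q : ℝ × ℝ => VarHAux.J q.1 ((-(1/θ))*q.2)) p := by
      simpa using VarHAux.Jcont2 hH (-(1/θ)) p.2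
    have cJ2 : ContinuousAt (fun q : ℝ × ℝ => VarHAux.J q.1 ((1/θ)*q.2)) p := by
      simpa using VarHAux.Jcont2 hH (1/θ) p.2
    have cexp : ContinuousAt (fun q : ℝ × ℝ => Real.exp (-2*q.2/θ)) p := by fun_prop
    have cg : ContinuousAt (fun q : ℝ × ℝ =>
        σ^2/2 * (q.2 ^ (2*q.1) * VarHAux.J q.1 ((-(1/θ))*q.2)
          + Real.exp (-2*q.2/θ) * (q.2 ^ (2*q.1) * VarHAux.J q.1 ((1/θ)*q.2)))) p :=
      continuousAt_const.mul ((crpow.mul cJ1).add (cexp.mul (crpow.mul cJ2)))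
    apply ContinuousWithinAt.congr cg.continuousWithinAt
    · intro q hq
      exact VarHAux.mf θ σ hq.1.1 hq.2
    · exact VarHAux.mf θ σ hH ht
  · -- limit H → 1⁻
    intro t ht
    rcases eq_or_lt_of_le ht with h0 | htpos
    · rw [← h0]
      rw [show (fun H => VarH θ σ H 0) = fun _ => (0:ℝ) from funext hVar0]
      have : σ^2 * θ^2 * (1 - Real.exp (-0/θ))^2 = 0 := by norm_num
      rw [this]
      exact tendsto_const_nhds
    · have hev : (fun H => σ^2/2 * (t ^ (2*H) * VarHAux.J H ((-(1/θ))*t)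
          + Real.exp (-2*t/θ) * (t ^ (2*H) * VarHAux.J H ((1/θ)*t))))
            =ᶠ[𝓝[<] (1:ℝ)] (fun H => VarH θ σ H t) := by
        filter_upwards [(eventually_gt_nhds (show (0:ℝ) < 1 by norm_num)).filter_mono
          nhdsWithin_le_nhds] with H hH
        exact (VarHAux.mf θ σ hH htpos.le).symm
      have crpow : ContinuousAt (fun H : ℝ => t ^ (2*H)) 1 :=
        ContinuousAt.rpow continuousAt_const
          ((continuous_const.mul continuous_id).continuousAt) (Or.inl (ne_of_gt htpos))
      have cJ1 : ContinuousAt (fun H : ℝ => VarHAux.J H ((-(1/θ))*t)) 1 :=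
        VarHAux.JcontH one_pos _
      have cJ2 : ContinuousAt (fun H : ℝ => VarHAux.J H ((1/θ)*t)) 1 :=
        VarHAux.JcontH one_pos _
      have lim : Tendsto (fun H : ℝ => σ^2/2 * (t ^ (2*H) * VarHAux.J H ((-(1/θ))*t)
          + Real.exp (-2*t/θ) * (t ^ (2*H) * VarHAux.J H ((1/θ)*t)))) (𝓝[<] (1:ℝ))
          (𝓝 (σ^2/2 * (t ^ ((2:ℝ)*1) * VarHAux.J 1 ((-(1/θ))*t)
            + Real.exp (-2*t/θ) * (t ^ ((2:ℝ)*1) * VarHAux.J 1 ((1/θ)*t))))) := by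
        exact (continuousAt_const.mul ((crpow.mul cJ1).add
          (continuousAt_const.mul (crpow.mul cJ2)))).tendsto.mono_left nhdsWithin_le_nhds
      have hval : σ^2/2 * (t ^ ((2:ℝ)*1) * VarHAux.J 1 ((-(1/θ))*t)
          + Real.exp (-2*t/θ) * (t ^ ((2:ℝ)*1) * VarHAux.J 1 ((1/θ)*t)))
          = σ^2 * θ^2 * (1 - Real.exp (-t/θ))^2 := by
        have hc1 : -(1/θ) ≠ 0 := neg_ne_zero.mpr (one_div_ne_zero hθ')
        have hc2 : (1/θ) ≠ 0 := one_div_ne_zero hθ'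
        have k1 := VarHAux.explicitIntegral hc1 t htpos.le
        have k2 := VarHAux.explicitIntegral hc2 t htpos.le
        rw [k1, k2]
        have f1 : Real.exp ((-(1/θ))*t) = Real.exp (-t/θ) := by
          congr 1; ring
        have f2 : Real.exp ((1/θ)*t) = (Real.exp (-t/θ))⁻¹ := by
          rw [← Real.exp_neg]; congr 1; ring
        have f3 : Real.exp (-2*t/θ) = (Real.exp (-t/θ))^2 := by
          rw [sq, ← Real.exp_add]; congr 1; ring
        rw [f1, f2, f3]
        have hA : Real.exp (-t/θ) ≠ 0 := (Real.exp_pos _).ne'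
        field_simp
        ring
      rw [← hval]
      exact lim.congr' hev
  · -- H → 0⁺ at t = 0
    rw [show (fun H => VarH θ σ H 0) = fun _ => (0:ℝ) from funext hVar0]
    exact tendsto_const_nhds
  · -- H → 0⁺ at t > 0
    intro t htpos
    have hev : (fun H => σ^2/2 * (t ^ (2*H) * VarHAux.J H ((-(1/θ))*t)
        + Real.exp (-2*t/θ) * (t ^ (2*H) * VarHAux.J H ((1/θ)*t))))
          =ᶠ[𝓝[>] (0:ℝ)] (fun H => VarH θ σ H t) := by
      filter_upwards [self_mem_nhdsWithin] with H hH
      exact (VarHAux.mf θ σ hH htpos.le).symm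
    have l1 : Tendsto (fun H : ℝ => t ^ (2*H)) (𝓝[>] (0:ℝ)) (𝓝 1) := by
      have hc : ContinuousAt (fun H : ℝ => t ^ (2*H)) 0 :=
        ContinuousAt.rpow continuousAt_const
          ((continuous_const.mul continuous_id).continuousAt) (Or.inl (ne_of_gt htpos))
      have h := hc.tendsto.mono_left (nhdsWithin_le_nhds (s := Set.Ioi (0:ℝ)))
      simpa using h
    have l2 := VarHAux.JtoOne ((-(1/θ))*t)
    have l3 := VarHAux.JtoOne ((1/θ)*t)
    have lim : Tendsto (fun H : ℝ => σ^2/2 * (t ^ (2*H) * VarHAux.J H ((-(1/θ))*t)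
        + Real.exp (-2*t/θ) * (t ^ (2*H) * VarHAux.J H ((1/θ)*t)))) (𝓝[>] (0:ℝ))
        (𝓝 (σ^2/2 * (1*1 + Real.exp (-2*t/θ) * (1*1)))) :=
      tendsto_const_nhds.mul ((l1.mul l2).add (tendsto_const_nhds.mul (l1.mul l3)))
    have hval : σ^2/2 * (1*1 + Real.exp (-2*t/θ) * (1*1))
        = σ^2/2 * (1 + Real.exp (-2*t/θ)) := by ring
    rw [← hval]
    exact lim.congr' hev
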